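/- For two continuous functions μ₁, μ₂ : [0,1] → ℝ and a common σ > 0, the L₁ distance between the mixture densities satisfies ‖f_{μ₁,σ} − f_{μ₂,σ}‖₁ ≤ C · ‖μ₁ − μ₂‖₁ / σ for a universal constant C (one may take C = √(2/π)), where ‖μ₁ − μ₂‖₁ = ∫₀¹ |μ₁(x) − μ₂(x)| dx. -/
import Mathlib
open MeasureTheory Real Set

/-- Gaussian density with mean 0 and standard deviation σ. -/
noncomputable def gauss (σ t : ℝ) : ℝ :=
  (Real.sqrt (2 * Real.pi) * σ)⁻¹ * Real.exp (-(t ^ 2) / (2 * σ ^ 2))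

lemma gauss_continuous (σ : ℝ) : Continuous (gauss σ) := by
  unfold gauss; fun_prop

lemma gauss_nonneg {σ : ℝ} (hσ : 0 < σ) (t : ℝ) : 0 ≤ gauss σ t := by
  unfold gauss; positivity

lemma gauss_le {σ : ℝ} (hσ : 0 < σ) (t : ℝ) : gauss σ t ≤ gauss σ 0 := by
  unfold gauss
  refine mul_le_mul_of_nonneg_left ?_ (by positivity)
  exact Real.exp_le_exp.2 (by rw [div_le_div_iff_of_pos_right (by positivity)]; nlinarith [sq_nonneg t])

lemma gauss_integrable {σ : ℝ} (hσ : 0 < σ) : Integrable (gauss σ) := by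
  have h : Integrable (fun t : ℝ => Real.exp (-(1/(2*σ^2)) * t^2)) :=
    integrable_exp_neg_mul_sq (by positivity)
  have := h.const_mul ((Real.sqrt (2 * Real.pi) * σ)⁻¹)
  refine this.congr (ae_of_all _ fun t => ?_)
  unfold gauss
  ring_nf

lemma integral_Iic_comp_sub (f : ℝ → ℝ) (m a : ℝ) :
    ∫ y in Iic m, f (y - a) = ∫ y in Iic (m - a), f y := by
  rw [← integral_indicator measurableSet_Iic, ← integral_indicator measurableSet_Iic]
  have h : ∀ y : ℝ, (Iic m).indicator (fun y => f (y - a)) y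
      = (Iic (m - a)).indicator f (y - a) := by
    intro y
    simp only [indicator_apply, mem_Iic, sub_le_sub_iff_right]
  simp_rw [h]
  exact integral_sub_right_eq_self ((Iic (m - a)).indicator f) a

lemma sqrt_two_div_pi : Real.sqrt (2 / Real.pi) = 2 / Real.sqrt (2 * Real.pi) := by
  rw [show (2 : ℝ) / Real.pi = 4 / (2 * Real.pi) by ring,
    Real.sqrt_div (by norm_num : (0:ℝ) ≤ 4),
    show (4:ℝ) = 2 ^ 2 by norm_num, Real.sqrt_sq (by norm_num)]

lemma gauss_l1_shift {σ : ℝ} (hσ : 0 < σ) {a b : ℝ} (hab : a ≤ b) :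
    ∫ y, |gauss σ (y - a) - gauss σ (y - b)| ≤ Real.sqrt (2 / Real.pi) * (b - a) / σ := by
  set m := (a + b) / 2 with hm
  have hInt := gauss_integrable hσ
  have hIa : Integrable (fun y => gauss σ (y - a)) := hInt.comp_sub_right a
  have hIb : Integrable (fun y => gauss σ (y - b)) := hInt.comp_sub_right b
  have habs : Integrable (fun y => |gauss σ (y - a) - gauss σ (y - b)|) := (hIa.sub hIb).abs
  -- monotonicity facts
  have hmono : ∀ s t : ℝ, t ^ 2 ≤ s ^ 2 → gauss σ s ≤ gauss σ t := by
    intro s t h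
    unfold gauss
    refine mul_le_mul_of_nonneg_left ?_ (by positivity)
    exact Real.exp_le_exp.2 (by rw [div_le_div_iff_of_pos_right (by positivity)]; linarith)
  have h1 : ∀ y ∈ Iic m, gauss σ (y - b) ≤ gauss σ (y - a) := by
    intro y hy; exact hmono _ _ (by simp only [mem_Iic, hm] at hy ⊢; nlinarith)
  have h2 : ∀ y ∈ Ioi m, gauss σ (y - a) ≤ gauss σ (y - b) := by
    intro y hy; exact hmono _ _ (by simp only [mem_Ioi, hm] at hy ⊢; nlinarith)
  -- split the integral
  have hsplit : ∫ y, |gauss σ (y - a) - gauss σ (y - b)|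
      = (∫ y in Iic m, (gauss σ (y - a) - gauss σ (y - b)))
        + ∫ y in Ioi m, (gauss σ (y - b) - gauss σ (y - a)) := by
    rw [← intervalIntegral.integral_Iic_add_Ioi habs.integrableOn habs.integrableOn]
    congr 1
    · refine setIntegral_congr_fun measurableSet_Iic fun y hy => ?_
      exact abs_of_nonneg (sub_nonneg.2 (h1 y hy))
    · refine setIntegral_congr_fun measurableSet_Ioi fun y hy => ?_
      rw [abs_sub_comm]
      exact abs_of_nonneg (sub_nonneg.2 (h2 y hy))
  have htotal : ∀ c : ℝ, (∫ y in Iic m, gauss σ (y - c)) + ∫ y in Ioi m, gauss σ (y - c)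
      = ∫ y, gauss σ y := by
    intro c
    rw [intervalIntegral.integral_Iic_add_Ioi (hInt.comp_sub_right c).integrableOn
      (hInt.comp_sub_right c).integrableOn]
    exact integral_sub_right_eq_self (gauss σ) c
  have key : ∫ y, |gauss σ (y - a) - gauss σ (y - b)|
      = 2 * ((∫ y in Iic (m - a), gauss σ y) - ∫ y in Iic (m - b), gauss σ y) := by
    rw [hsplit,
      integral_sub (hIa.integrableOn) (hIb.integrableOn),
      integral_sub (hIb.integrableOn) (hIa.integrableOn)]
    have e1 := htotal a
    have e2 := htotal b
    rw [integral_Iic_comp_sub (gauss σ) m a] at e1 ⊢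
    rw [integral_Iic_comp_sub (gauss σ) m b] at e2 ⊢
    linarith
  rw [key, intervalIntegral.integral_Iic_sub_Iic hInt.integrableOn hInt.integrableOn]
  have hle : m - b ≤ m - a := by linarith
  have hbound : (∫ y in (m - b)..(m - a), gauss σ y) ≤ (b - a) * gauss σ 0 := by
    have := intervalIntegral.integral_mono_on hle
      hInt.intervalIntegrable (intervalIntegrable_const (c := gauss σ 0))
      (fun x _ => gauss_le hσ x)
    rw [intervalIntegral.integral_const] at this
    calc (∫ y in (m - b)..(m - a), gauss σ y) ≤ (m - a - (m - b)) • gauss σ 0 := this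
      _ = (b - a) * gauss σ 0 := by rw [smul_eq_mul]; ring_nf
  have hg0 : gauss σ 0 = (Real.sqrt (2 * Real.pi) * σ)⁻¹ := by
    unfold gauss; norm_num
  have hsqrt : Real.sqrt (2 * Real.pi) > 0 := Real.sqrt_pos.2 (by positivity)
  calc 2 * ∫ y in (m - b)..(m - a), gauss σ y ≤ 2 * ((b - a) * gauss σ 0) := by linarith
    _ = Real.sqrt (2 / Real.pi) * (b - a) / σ := by
        rw [hg0, sqrt_two_div_pi]
        field_simp

lemma gauss_l1_shift' {σ : ℝ} (hσ : 0 < σ) (a b : ℝ) :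
    ∫ y, |gauss σ (y - a) - gauss σ (y - b)| ≤ Real.sqrt (2 / Real.pi) * |a - b| / σ := by
  rcases le_total a b with h | h
  · rw [abs_sub_comm, abs_of_nonneg (sub_nonneg.2 h)]
    exact gauss_l1_shift hσ h
  · rw [abs_of_nonneg (sub_nonneg.2 h)]
    simp_rw [abs_sub_comm (gauss σ (_ - a))]
    exact gauss_l1_shift hσ h

/-- NL-LVM mixture density with transfer function μ and bandwidth σ. -/
noncomputable def mixDens (μ : ℝ → ℝ) (σ : ℝ) (y : ℝ) : ℝ :=
  ∫ x in Set.Icc (0 : ℝ) 1, gauss σ (y - μ x)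

/-- L₁ distance between mixture densities with common bandwidth is
bounded by `√(2/π) · ‖μ₁ − μ₂‖₁ / σ`. -/
theorem stmt_8 (μ₁ μ₂ : ℝ → ℝ) (hμ₁ : ContinuousOn μ₁ (Set.Icc 0 1))
    (hμ₂ : ContinuousOn μ₂ (Set.Icc 0 1)) (σ : ℝ) (hσ : 0 < σ) :
    ∫ y, |mixDens μ₁ σ y - mixDens μ₂ σ y|
      ≤ Real.sqrt (2 / Real.pi) * (∫ x in Set.Icc (0 : ℝ) 1, |μ₁ x - μ₂ x|) / σ := by
  set c := Real.sqrt (2 / Real.pi) with hc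
  have hc0 : 0 ≤ c := Real.sqrt_nonneg _
  have hK : IsCompact (Icc (0:ℝ) 1) := isCompact_Icc
  set D : ℝ → ℝ → ℝ := fun x y => gauss σ (y - μ₁ x) - gauss σ (y - μ₂ x) with hD
  -- integrability in x, for fixed y
  have hcont₁ : ∀ y : ℝ, ContinuousOn (fun x => gauss σ (y - μ₁ x)) (Icc 0 1) :=
    fun y => (gauss_continuous σ).comp_continuousOn (continuousOn_const.sub hμ₁)
  have hcont₂ : ∀ y : ℝ, ContinuousOn (fun x => gauss σ (y - μ₂ x)) (Icc 0 1) :=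
    fun y => (gauss_continuous σ).comp_continuousOn (continuousOn_const.sub hμ₂)
  have hint₁ : ∀ y : ℝ, IntegrableOn (fun x => gauss σ (y - μ₁ x)) (Icc 0 1) :=
    fun y => (hcont₁ y).integrableOn_compact hK
  have hint₂ : ∀ y : ℝ, IntegrableOn (fun x => gauss σ (y - μ₂ x)) (Icc 0 1) :=
    fun y => (hcont₂ y).integrableOn_compact hK
  -- the product measure
  set ν : Measure ℝ := volume.restrict (Icc 0 1) with hν
  have hprodeq : (volume : Measure ℝ).prod ν = ((volume : Measure ℝ).prod volume).restrict (univ ×ˢ Icc 0 1) := by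
    rw [hν, ← Measure.prod_restrict, Measure.restrict_univ]
  -- joint a.e.-measurability of the two gaussian kernels
  have hjm : ∀ (μ' : ℝ → ℝ), ContinuousOn μ' (Icc 0 1) →
      AEStronglyMeasurable (fun p : ℝ × ℝ => gauss σ (p.1 - μ' p.2)) ((volume : Measure ℝ).prod ν) := by
    intro μ' hμ'
    have hco : ContinuousOn (fun p : ℝ × ℝ => gauss σ (p.1 - μ' p.2)) (univ ×ˢ Icc 0 1) := by
      apply (gauss_continuous σ).comp_continuousOn
      exact (continuousOn_fst.sub (hμ'.comp continuousOn_snd (fun p hp => hp.2)))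
    rw [hprodeq]
    exact (hco.aemeasurable (MeasurableSet.univ.prod measurableSet_Icc)).aestronglyMeasurable
  have hjm₁ := hjm μ₁ hμ₁
  have hjm₂ := hjm μ₂ hμ₂
  have hjmD : AEStronglyMeasurable (fun p : ℝ × ℝ => D p.2 p.1) ((volume : Measure ℝ).prod ν) :=
    hjm₁.sub hjm₂
  -- measurability of the difference of mixture densities
  have hΔm : AEStronglyMeasurable (fun y => mixDens μ₁ σ y - mixDens μ₂ σ y) volume := by
    have h1 : AEStronglyMeasurable (fun y => mixDens μ₁ σ y) volume :=
      hjm₁.integral_prod_right'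
    have h2 : AEStronglyMeasurable (fun y => mixDens μ₂ σ y) volume :=
      hjm₂.integral_prod_right'
    exact h1.sub h2
  -- pointwise bound by inner lintegral
  have hptw : ∀ y : ℝ, ENNReal.ofReal |mixDens μ₁ σ y - mixDens μ₂ σ y|
      ≤ ∫⁻ x in Icc (0:ℝ) 1, ENNReal.ofReal |D x y| := by
    intro y
    have heq : mixDens μ₁ σ y - mixDens μ₂ σ y = ∫ x in Icc (0:ℝ) 1, D x y :=
      (integral_sub (hint₁ y) (hint₂ y)).symm
    rw [heq, ← Real.enorm_eq_ofReal_abs]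
    simp_rw [← Real.enorm_eq_ofReal_abs]
    exact enorm_integral_le_lintegral_enorm _
  -- Tonelli
  have hswap : ∫⁻ y, ∫⁻ x in Icc (0:ℝ) 1, ENNReal.ofReal |D x y|
      = ∫⁻ x in Icc (0:ℝ) 1, ∫⁻ y, ENNReal.ofReal |D x y| := by
    have hAE : AEMeasurable (fun p : ℝ × ℝ => ENNReal.ofReal |D p.2 p.1|)
        ((volume : Measure ℝ).prod ν) :=
      ENNReal.measurable_ofReal.comp_aemeasurable
        (continuous_abs.measurable.comp_aemeasurable hjmD.aemeasurable)
    exact lintegral_lintegral_swap hAE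
  -- inner bound
  have hinner : ∀ x : ℝ, ∫⁻ y, ENNReal.ofReal |D x y| ≤ ENNReal.ofReal (c * |μ₁ x - μ₂ x| / σ) := by
    intro x
    have hi : Integrable (fun y => |D x y|) :=
      (((gauss_integrable hσ).comp_sub_right (μ₁ x)).sub
        ((gauss_integrable hσ).comp_sub_right (μ₂ x))).abs
    rw [← ofReal_integral_eq_lintegral_ofReal hi (ae_of_all _ fun y => abs_nonneg _)]
    exact ENNReal.ofReal_le_ofReal (gauss_l1_shift' hσ (μ₁ x) (μ₂ x))
  -- integrability of the x-bound
  have hbint : IntegrableOn (fun x => c * |μ₁ x - μ₂ x| / σ) (Icc (0:ℝ) 1) := by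
    apply ContinuousOn.integrableOn_compact hK
    exact ((continuousOn_const.mul (hμ₁.sub hμ₂).abs).div_const σ)
  have hbnn : 0 ≤ᵐ[ν] fun x => c * |μ₁ x - μ₂ x| / σ :=
    ae_of_all _ fun x => by positivity
  have houter : ∫⁻ x in Icc (0:ℝ) 1, ENNReal.ofReal (c * |μ₁ x - μ₂ x| / σ)
      = ENNReal.ofReal (∫ x in Icc (0:ℝ) 1, c * |μ₁ x - μ₂ x| / σ) :=
    (ofReal_integral_eq_lintegral_ofReal hbint hbnn).symm
  -- final chain
  have hchain : ∫⁻ y, ENNReal.ofReal |mixDens μ₁ σ y - mixDens μ₂ σ y|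
      ≤ ENNReal.ofReal (∫ x in Icc (0:ℝ) 1, c * |μ₁ x - μ₂ x| / σ) := by
    calc ∫⁻ y, ENNReal.ofReal |mixDens μ₁ σ y - mixDens μ₂ σ y|
        ≤ ∫⁻ y, ∫⁻ x in Icc (0:ℝ) 1, ENNReal.ofReal |D x y| := lintegral_mono hptw
      _ = ∫⁻ x in Icc (0:ℝ) 1, ∫⁻ y, ENNReal.ofReal |D x y| := hswap
      _ ≤ ∫⁻ x in Icc (0:ℝ) 1, ENNReal.ofReal (c * |μ₁ x - μ₂ x| / σ) :=
          lintegral_mono fun x => hinner x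
      _ = _ := houter
  have hfin : ∫ x in Icc (0:ℝ) 1, c * |μ₁ x - μ₂ x| / σ
      = c * (∫ x in Icc (0:ℝ) 1, |μ₁ x - μ₂ x|) / σ := by
    simp_rw [mul_div_assoc]
    rw [integral_const_mul, integral_div]
  rw [integral_eq_lintegral_of_nonneg_ae (ae_of_all _ fun y => abs_nonneg _) (continuous_abs.comp_aestronglyMeasurable hΔm)]
  have hRnn : 0 ≤ ∫ x in Icc (0:ℝ) 1, c * |μ₁ x - μ₂ x| / σ :=
    setIntegral_nonneg measurableSet_Icc fun x _ => by positivity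
  calc (∫⁻ y, ENNReal.ofReal |mixDens μ₁ σ y - mixDens μ₂ σ y|).toReal
      ≤ (ENNReal.ofReal (∫ x in Icc (0:ℝ) 1, c * |μ₁ x - μ₂ x| / σ)).toReal :=
        ENNReal.toReal_mono ENNReal.ofReal_ne_top hchain
    _ = ∫ x in Icc (0:ℝ) 1, c * |μ₁ x - μ₂ x| / σ := ENNReal.toReal_ofReal hRnn
    _ = c * (∫ x in Icc (0:ℝ) 1, |μ₁ x - μ₂ x|) / σ := hfin
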